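/- Let f : R^n → [0,∞) be convex with f(x̂) ≥ 0, C ⊆ R^n closed convex, α > 0, c > 0, and suppose x̂ ∈ prox_{2αcf + ι_C}(x − αw) for some x ∈ C, w ∈ R^n. Then ||x̂ − x||_2 ≤ α||w||_2 + √(α²||w||_2² + 4αc f(x)). -/

import Mathlib

/-- Bound on the proximal step length: if `x̂` is a minimizer of
`y ↦ 2αc f(y) + ι_C(y) + ½‖y − (x − αw)‖²` with `f ≥ 0` convex, then
`‖x̂ − x‖ ≤ α‖w‖ + √(α²‖w‖² + 4αc f(x))`. -/
theorem prox_step_length_bound {n : ℕ}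
    (f : EuclideanSpace ℝ (Fin n) → ℝ) (hfconv : ConvexOn ℝ Set.univ f)
    (hf0 : ∀ y, 0 ≤ f y)
    (C : Set (EuclideanSpace ℝ (Fin n))) (hCclosed : IsClosed C) (hCconv : Convex ℝ C)
    (α c : ℝ) (hα : 0 < α) (hc : 0 < c)
    (x w xh : EuclideanSpace ℝ (Fin n)) (hx : x ∈ C)
    (hprox : xh ∈ C ∧ ∀ y ∈ C,
      2 * α * c * f xh + (1 / 2) * ‖xh - (x - α • w)‖ ^ 2 ≤
        2 * α * c * f y + (1 / 2) * ‖y - (x - α • w)‖ ^ 2) :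
    ‖xh - x‖ ≤ α * ‖w‖ + Real.sqrt (α ^ 2 * ‖w‖ ^ 2 + 4 * α * c * f x) := by
  set t := ‖xh - x‖ with ht
  have hkey := hprox.2 x hx
  have hrw : xh - (x - α • w) = (xh - x) + α • w := by abel
  have hexp : ‖xh - (x - α • w)‖ ^ 2
      = t ^ 2 + 2 * inner ℝ (xh - x) (α • w) + ‖α • w‖ ^ 2 := by
    rw [hrw, ht]
    rw [show (2:ℕ) = 2 from rfl]
    have := @norm_add_sq_real (EuclideanSpace ℝ (Fin n)) _ _ (xh - x) (α • w)
    linarith [this]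
  have hx2 : ‖x - (x - α • w)‖ ^ 2 = ‖α • w‖ ^ 2 := by
    congr 1; rw [show x - (x - α • w) = α • w by abel]
  have hinner : -(t * (α * ‖w‖)) ≤ inner ℝ (xh - x) (α • w) := by
    have h1 := abs_real_inner_le_norm (xh - x) (α • w)
    have h2 : ‖α • w‖ ≤ α * ‖w‖ := by
      rw [norm_smul, Real.norm_eq_abs, abs_of_pos hα]
    have h3 := neg_abs_le (inner ℝ (xh - x) (α • w) : ℝ)
    nlinarith [norm_nonneg (xh - x)]
  have hfxh := hf0 xh
  have hquad : t ^ 2 ≤ 2 * (α * ‖w‖) * t + 4 * α * c * f x := by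
    rw [hexp, hx2] at hkey
    have hpos : 0 ≤ 2 * α * c * f xh :=
      mul_nonneg (mul_nonneg (by linarith) hc.le) hfxh
    linarith
  have hnn : 0 ≤ α ^ 2 * ‖w‖ ^ 2 + 4 * α * c * f x := by
    have := hf0 x
    positivity
  have hsq : (t - α * ‖w‖) ^ 2 ≤ α ^ 2 * ‖w‖ ^ 2 + 4 * α * c * f x := by nlinarith
  have hle : t - α * ‖w‖ ≤ Real.sqrt (α ^ 2 * ‖w‖ ^ 2 + 4 * α * c * f x) := by
    rcases le_or_gt (t - α * ‖w‖) 0 with h | h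
    · exact h.trans (Real.sqrt_nonneg _)
    · exact (Real.le_sqrt h.le hnn).mpr hsq
  linarith
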